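/- Let a(t) = a₀ + t•u and b(t) = b₀ + t•v be two kinetic points in ℝ² whose trajectories in ℝ³ (the lines {(a(t), t)} and {(b(t), t)}) are skew (neither intersecting nor parallel). Then the function F(p₁, p₂, t) = det(a(t) - p, b(t) - p) is a polynomial of total degree exactly 2 in (p₁, p₂, t), and its zero set is a quadric surface (it is irreducible of degree 2, not a union of two planes). -/

import Mathlib

open MvPolynomial

noncomputable def quadP (c0 c1 d α β e δ : ℝ) : MvPolynomial (Fin 3) ℝ :=
  C c0 * X 0 * X 2 + C c1 * X 1 * X 2 + C d * X 2 ^ 2 +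
    C α * X 0 + C β * X 1 + C e * X 2 + C δ


lemma quadP_eval (c0 c1 d α β e δ : ℝ) (x : Fin 3 → ℝ) :
    eval x (quadP c0 c1 d α β e δ) =
      c0 * x 0 * x 2 + c1 * x 1 * x 2 + d * x 2 ^ 2 + α * x 0 + β * x 1 + e * x 2 + δ := by
  simp [quadP]

lemma quadP_totalDegree (c0 c1 d α β e δ : ℝ) (hc0 : c0 ≠ 0) :
    (quadP c0 c1 d α β e δ).totalDegree = 2 := by
  have hadd : ∀ p q : MvPolynomial (Fin 3) ℝ,
      p.totalDegree ≤ 2 → q.totalDegree ≤ 2 → (p + q).totalDegree ≤ 2 :=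
    fun p q hp hq => le_trans (totalDegree_add p q) (max_le hp hq)
  have hmul2 : ∀ (p q : MvPolynomial (Fin 3) ℝ), p.totalDegree ≤ 1 → q.totalDegree ≤ 1 →
      (p * q).totalDegree ≤ 2 :=
    fun p q hp hq => le_trans (totalDegree_mul p q) (add_le_add hp hq)
  have hC1 : ∀ (c : ℝ) (i : Fin 3), (C c * X i).totalDegree ≤ 1 :=
    fun c i => le_trans (totalDegree_mul _ _) (by simp [totalDegree_C, totalDegree_X])
  apply le_antisymm
  · unfold quadP
    refine hadd _ _ (hadd _ _ (hadd _ _ (hadd _ _ (hadd _ _ (hadd _ _ ?_ ?_) ?_) ?_) ?_) ?_) ?_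
    · exact hmul2 _ _ (hC1 _ _) (by simp [totalDegree_X])
    · exact hmul2 _ _ (hC1 _ _) (by simp [totalDegree_X])
    · exact le_trans (totalDegree_mul _ _) (by simp [totalDegree_C, totalDegree_X_pow])
    · exact le_trans (hC1 _ _) (by norm_num)
    · exact le_trans (hC1 _ _) (by norm_num)
    · exact le_trans (hC1 _ _) (by norm_num)
    · simp [totalDegree_C]
  · have hcoeff : coeff (Finsupp.single 0 1 + Finsupp.single 2 1) (quadP c0 c1 d α β e δ) = c0 := by
      unfold quadP
      simp [coeff_add, coeff_C_mul, coeff_mul_X', coeff_X', coeff_C, coeff_X_pow,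
        Finsupp.single_eq_zero, Finsupp.add_eq_zero_iff, @eq_comm _ (0 : Fin 3 →₀ ℕ),
        Finsupp.ext_iff, Finsupp.single_apply, Fin.forall_fin_succ]
    have hmem : (Finsupp.single 0 1 + Finsupp.single 2 1) ∈ (quadP c0 c1 d α β e δ).support :=
      mem_support_iff.mpr (by rw [hcoeff]; exact hc0)
    have := le_totalDegree hmem
    simpa [Finsupp.sum_add_index, Finsupp.sum_single_index] using this

noncomputable def Ap (c0 α : ℝ) : MvPolynomial (Fin 2) ℝ := C c0 * X 1 + C α
noncomputable def Bp (c1 d β e δ : ℝ) : MvPolynomial (Fin 2) ℝ :=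
  C c1 * X 0 * X 1 + C d * X 1 ^ 2 + C β * X 0 + C e * X 1 + C δ

noncomputable def ψ2 : MvPolynomial (Fin 2) ℝ ≃ₐ[ℝ] Polynomial (MvPolynomial (Fin 1) ℝ) :=
  (renameEquiv ℝ (Equiv.swap 0 1)).trans (finSuccEquiv ℝ 1)

lemma divisor_of_Ap (c0 α : ℝ) (hc0 : c0 ≠ 0) (h : MvPolynomial (Fin 2) ℝ)
    (hdvd : h ∣ Ap c0 α) : IsUnit h ∨ Ap c0 α ∣ h := by
  obtain ⟨g, hg⟩ := hdvd
  have hC1 : ∀ r : ℝ, finSuccEquiv ℝ 1 (C r) = Polynomial.C (C r) := fun r => by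
    simp [finSuccEquiv_apply]
  have hψA : ψ2 (Ap c0 α) = Polynomial.C (C c0) * Polynomial.X + Polynomial.C (C α) := by
    simp [ψ2, Ap, map_add, map_mul, rename_X, Equiv.swap_apply_right, hC1,
      finSuccEquiv_X_zero]
  have hCc0 : (C c0 : MvPolynomial (Fin 1) ℝ) ≠ 0 := by
    simpa using hc0
  have hdegA : (ψ2 (Ap c0 α)).natDegree = 1 := by
    rw [hψA]; exact Polynomial.natDegree_linear hCc0
  have hAne : ψ2 (Ap c0 α) ≠ 0 := by intro h0; rw [h0] at hdegA; simp at hdegA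
  have hmul : ψ2 (Ap c0 α) = ψ2 h * ψ2 g := by rw [hg, map_mul]
  have hhne : ψ2 h ≠ 0 := left_ne_zero_of_mul (hmul ▸ hAne)
  have hgne : ψ2 g ≠ 0 := right_ne_zero_of_mul (hmul ▸ hAne)
  have hadd : (ψ2 h).natDegree + (ψ2 g).natDegree = 1 := by
    rw [← Polynomial.natDegree_mul hhne hgne, ← hmul, hdegA]
  have hunit : IsUnit (C c0 : MvPolynomial (Fin 1) ℝ) :=
    (isUnit_iff_ne_zero.mpr hc0).map (C : ℝ →+* MvPolynomial (Fin 1) ℝ)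
  have hcoeff1 : (ψ2 (Ap c0 α)).coeff 1 = C c0 := by
    rw [hψA]; simp
  rcases Nat.eq_zero_or_pos (ψ2 h).natDegree with h0 | hpos
  · -- h is (mapped to) a constant; it divides the unit leading coefficient
    left
    have hhC : ψ2 h = Polynomial.C ((ψ2 h).coeff 0) := Polynomial.eq_C_of_natDegree_eq_zero h0
    have : C c0 = (ψ2 h).coeff 0 * (ψ2 g).coeff 1 := by
      rw [← hcoeff1, hmul, hhC, Polynomial.coeff_C_mul]; simp
    have huh : IsUnit ((ψ2 h).coeff 0) := isUnit_of_mul_isUnit_left (this ▸ hunit)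
    have : IsUnit (ψ2 h) := hhC ▸ (Polynomial.isUnit_C.mpr huh)
    have := this.map ψ2.symm
    simpa using this
  · -- h has degree 1, so g is constant and in fact a unit
    right
    have hg0 : (ψ2 g).natDegree = 0 := by omega
    have hgC : ψ2 g = Polynomial.C ((ψ2 g).coeff 0) := Polynomial.eq_C_of_natDegree_eq_zero hg0
    have : C c0 = (ψ2 h).coeff 1 * (ψ2 g).coeff 0 := by
      rw [← hcoeff1, hmul, hgC, Polynomial.coeff_mul_C]; simp
    have hug : IsUnit ((ψ2 g).coeff 0) := isUnit_of_mul_isUnit_right (this ▸ hunit)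
    have : IsUnit (ψ2 g) := hgC ▸ (Polynomial.isUnit_C.mpr hug)
    have hgu : IsUnit g := by have := this.map ψ2.symm; simpa using this
    obtain ⟨gu, hgu⟩ := hgu
    refine ⟨↑gu⁻¹, ?_⟩
    rw [hg, ← hgu, mul_assoc]
    simp

lemma quadP_finSuccEquiv (c0 c1 d α β e δ : ℝ) :
    finSuccEquiv ℝ 2 (quadP c0 c1 d α β e δ) =
      Polynomial.C (Ap c0 α) * Polynomial.X + Polynomial.C (Bp c1 d β e δ) := by
  have h1 : (1 : Fin 3) = Fin.succ 0 := rfl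
  have h2 : (2 : Fin 3) = Fin.succ 1 := rfl
  have hC : ∀ r : ℝ, finSuccEquiv ℝ 2 (C r) = Polynomial.C (C r) := fun r => by
    simp [finSuccEquiv_apply]
  simp only [quadP, Ap, Bp, map_add, map_mul, map_pow, h1, h2, finSuccEquiv_X_zero,
    finSuccEquiv_X_succ, hC, map_add]
  ring

lemma quadP_irreducible (c0 c1 d α β e δ : ℝ) (hc0 : c0 ≠ 0)
    (H : ∃ x : Fin 3 → ℝ, c0 * x 2 + α = 0 ∧ eval x (quadP c0 c1 d α β e δ) ≠ 0) :
    Irreducible (quadP c0 c1 d α β e δ) := by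
  set A := Ap c0 α with hA
  set B := Bp c1 d β e δ with hB
  have hφ : finSuccEquiv ℝ 2 (quadP c0 c1 d α β e δ) =
      Polynomial.C A * Polynomial.X + Polynomial.C B := quadP_finSuccEquiv _ _ _ _ _ _ _
  have hAne : A ≠ 0 := by
    intro h0
    have : coeff (Finsupp.single 1 1) A = c0 := by
      simp [hA, Ap, coeff_C_mul, coeff_X', coeff_C, Finsupp.single_eq_zero,
        @eq_comm _ (0 : Fin 2 →₀ ℕ)]
    rw [h0] at this
    simp at this
    exact hc0 this.symm
  have hABdvd : ¬ (A ∣ B) := by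
    rintro ⟨q, hq⟩
    obtain ⟨x, hx2, hxne⟩ := H
    apply hxne
    have hAeval : eval ![x 1, x 2] A = 0 := by
      simp [hA, Ap]
      linarith
    have hBeval : eval ![x 1, x 2] B = 0 := by
      rw [hq, map_mul, hAeval, zero_mul]
    have hsplit : eval x (quadP c0 c1 d α β e δ) =
        (c0 * x 2 + α) * x 0 + eval ![x 1, x 2] B := by
      simp [quadP, hB, Bp]
      ring
    rw [hsplit, hx2, hBeval]
    ring
  set Q := Polynomial.C A * Polynomial.X + Polynomial.C B with hQdef
  have hQdeg : Q.natDegree = 1 := Polynomial.natDegree_linear hAne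
  have hQne : Q ≠ 0 := by intro h0; rw [h0] at hQdeg; simp at hQdeg
  have hQcoeff1 : Q.coeff 1 = A := by simp [hQdef]
  have hQcoeff0 : Q.coeff 0 = B := by simp [hQdef]
  have key : ∀ G H' : Polynomial (MvPolynomial (Fin 2) ℝ),
      Q = G * H' → H'.natDegree = 0 → IsUnit H' := by
    intro G H' hQGH hH0
    have hH'C : H' = Polynomial.C (H'.coeff 0) := Polynomial.eq_C_of_natDegree_eq_zero hH0
    have hhA : H'.coeff 0 ∣ A :=
      ⟨G.coeff 1, by rw [← hQcoeff1, hQGH, hH'C, Polynomial.coeff_mul_C]; simp [mul_comm]⟩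
    have hhB : H'.coeff 0 ∣ B :=
      ⟨G.coeff 0, by rw [← hQcoeff0, hQGH, hH'C, Polynomial.coeff_mul_C]; simp [mul_comm]⟩
    rcases divisor_of_Ap c0 α hc0 _ hhA with hu | hAh
    · exact hH'C ▸ Polynomial.isUnit_C.mpr hu
    · exact absurd (dvd_trans hAh hhB) hABdvd
  have hQirr : Irreducible Q := by
    constructor
    · exact Polynomial.not_isUnit_of_natDegree_pos Q (by omega)
    · intro G H' hGH'
      have hGne : G ≠ 0 := left_ne_zero_of_mul (hGH' ▸ hQne)
      have hH'ne : H' ≠ 0 := right_ne_zero_of_mul (hGH' ▸ hQne)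
      have hsum : G.natDegree + H'.natDegree = 1 := by
        rw [← Polynomial.natDegree_mul hGne hH'ne, ← hGH', hQdeg]
      rcases Nat.eq_zero_or_pos H'.natDegree with h0 | hpos
      · exact Or.inr (key G H' hGH' h0)
      · exact Or.inl (key H' G (by rw [hGH', mul_comm]) (by omega))
  rw [← hφ] at hQirr
  exact (MulEquiv.irreducible_iff (finSuccEquiv ℝ 2)).mp hQirr


/-- Signed area determinant of two vectors in the plane. -/
def sdet (x y : ℝ × ℝ) : ℝ := x.1 * y.2 - x.2 * y.1

/-- For two kinetic points whose trajectories in `ℝ³` are skew (they never collide and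
their velocities differ, so the trajectory lines neither intersect nor are parallel),
the function `F(p₁, p₂, t) = det(a(t) - p, b(t) - p)` is a polynomial of total degree
exactly `2` in `(p₁, p₂, t)`, and it is irreducible (so its zero set is an irreducible
quadric surface, not a union of two planes). -/
theorem skew_collinearity_surface_is_irreducible_quadric
    (a₀ b₀ u v : ℝ × ℝ)
    (hnotpar : u ≠ v)
    (hnocollide : ∀ t : ℝ, a₀ + t • u ≠ b₀ + t • v) :
    ∃ F : MvPolynomial (Fin 3) ℝ,
      F.totalDegree = 2 ∧ Irreducible F ∧
      ∀ x : Fin 3 → ℝ,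
        MvPolynomial.eval x F =
          sdet ((a₀ + x 2 • u) - (x 0, x 1)) ((b₀ + x 2 • v) - (x 0, x 1)) := by
  set c0 : ℝ := u.2 - v.2 with hc0def
  set c1 : ℝ := v.1 - u.1 with hc1def
  set d : ℝ := u.1 * v.2 - u.2 * v.1 with hddef
  set α : ℝ := a₀.2 - b₀.2 with hαdef
  set β : ℝ := b₀.1 - a₀.1 with hβdef
  set e : ℝ := a₀.1 * v.2 + u.1 * b₀.2 - a₀.2 * v.1 - u.2 * b₀.1 with hedef
  set δ : ℝ := a₀.1 * b₀.2 - a₀.2 * b₀.1 with hδdef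
  have heval : ∀ x : Fin 3 → ℝ,
      eval x (quadP c0 c1 d α β e δ) =
        sdet ((a₀ + x 2 • u) - (x 0, x 1)) ((b₀ + x 2 • v) - (x 0, x 1)) := by
    intro x
    rw [quadP_eval]
    simp only [sdet, Prod.fst_sub, Prod.snd_sub, Prod.fst_add, Prod.snd_add,
      Prod.smul_fst, Prod.smul_snd, smul_eq_mul]
    ring
  -- witness: for every t there is a point where the polynomial is nonzero on the slice
  have wit : ∀ t : ℝ, ∃ x : Fin 3 → ℝ, x 2 = t ∧ eval x (quadP c0 c1 d α β e δ) ≠ 0 := by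
    intro t
    set w : ℝ × ℝ := (b₀ + t • v) - (a₀ + t • u) with hwdef
    have hwne : w ≠ 0 := sub_ne_zero.mpr (Ne.symm (hnocollide t))
    have hw12 : w.1 ≠ 0 ∨ w.2 ≠ 0 := by
      by_contra h
      push_neg at h
      exact hwne (Prod.ext h.1 h.2)
    set p : ℝ × ℝ := (a₀ + t • u) + (w.2, -w.1) with hpdef
    refine ⟨![p.1, p.2, t], by simp, ?_⟩
    have := heval ![p.1, p.2, t]
    rw [this]
    have hval : sdet ((a₀ + (![p.1, p.2, t]) 2 • u) - ((![p.1, p.2, t]) 0, (![p.1, p.2, t]) 1))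
        ((b₀ + (![p.1, p.2, t]) 2 • v) - ((![p.1, p.2, t]) 0, (![p.1, p.2, t]) 1)) =
        -(w.1 ^ 2 + w.2 ^ 2) := by
      simp only [Matrix.cons_val_zero, Matrix.cons_val_one, Matrix.head_cons,
        Matrix.cons_val_two, Matrix.tail_cons]
      simp only [sdet, hpdef, hwdef, Prod.fst_sub, Prod.snd_sub, Prod.fst_add, Prod.snd_add,
        Prod.smul_fst, Prod.smul_snd, smul_eq_mul]
      ring
    rw [hval]
    have hpos : 0 < w.1 ^ 2 + w.2 ^ 2 := by
      rcases hw12 with h | h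
      · have : 0 < w.1 ^ 2 := by positivity
        nlinarith [sq_nonneg w.2]
      · have : 0 < w.2 ^ 2 := by positivity
        nlinarith [sq_nonneg w.1]
    intro h0
    rw [neg_eq_zero] at h0
    exact ne_of_gt hpos h0
  have hc01 : c0 ≠ 0 ∨ c1 ≠ 0 := by
    by_contra h
    push_neg at h
    apply hnotpar
    have h1 : u.2 = v.2 := by have := h.1; rw [hc0def] at this; linarith [sub_eq_zero.mp this]
    have h2 : u.1 = v.1 := by have := h.2; rw [hc1def] at this; linarith [sub_eq_zero.mp this]
    exact Prod.ext h2 h1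
  refine ⟨quadP c0 c1 d α β e δ, ?_, ?_, heval⟩
  · -- total degree
    rcases hc01 with h | h
    · exact quadP_totalDegree _ _ _ _ _ _ _ h
    · -- use the renamed polynomial
      have e1 : quadP c0 c1 d α β e δ =
          rename (⇑(Equiv.swap (0 : Fin 3) 1)) (quadP c1 c0 d β α e δ) := by
        have hs2 : (Equiv.swap (0 : Fin 3) 1) 2 = 2 :=
          Equiv.swap_apply_of_ne_of_ne (by decide) (by decide)
        simp only [quadP, map_add, map_mul, map_pow, rename_X, rename_C,
          Equiv.swap_apply_left, Equiv.swap_apply_right, hs2]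
        ring
      have e2 : rename (⇑(Equiv.swap (0 : Fin 3) 1)) (quadP c0 c1 d α β e δ) =
          quadP c1 c0 d β α e δ := by
        rw [e1, rename_rename]
        have : (⇑(Equiv.swap (0 : Fin 3) 1)) ∘ (⇑(Equiv.swap (0 : Fin 3) 1)) = id := by
          funext i; simp [Equiv.swap_apply_self]
        rw [this, rename_id, AlgHom.id_apply]
      have hq := quadP_totalDegree c1 c0 d β α e δ h
      apply le_antisymm
      · rw [e1]; exact le_trans (totalDegree_rename_le _ _) (le_of_eq hq)
      · have h3 := totalDegree_rename_le (⇑(Equiv.swap (0 : Fin 3) 1))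
          (quadP c0 c1 d α β e δ)
        rw [e2, hq] at h3
        exact h3
  · -- irreducibility
    rcases hc01 with h | h
    · apply quadP_irreducible _ _ _ _ _ _ _ h
      obtain ⟨x, hx2, hxne⟩ := wit (-α / c0)
      exact ⟨x, by rw [hx2]; field_simp; ring, hxne⟩
    · have e1 : quadP c0 c1 d α β e δ =
          rename (⇑(Equiv.swap (0 : Fin 3) 1)) (quadP c1 c0 d β α e δ) := by
        have hs2 : (Equiv.swap (0 : Fin 3) 1) 2 = 2 :=
          Equiv.swap_apply_of_ne_of_ne (by decide) (by decide)
        simp only [quadP, map_add, map_mul, map_pow, rename_X, rename_C,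
          Equiv.swap_apply_left, Equiv.swap_apply_right, hs2]
        ring
      have hqirr : Irreducible (quadP c1 c0 d β α e δ) := by
        apply quadP_irreducible _ _ _ _ _ _ _ h
        obtain ⟨x, hx2, hxne⟩ := wit (-β / c1)
        refine ⟨![x 1, x 0, x 2], by simp [hx2]; field_simp; ring, ?_⟩
        rw [quadP_eval]
        rw [quadP_eval] at hxne
        simp only [Matrix.cons_val_zero, Matrix.cons_val_one, Matrix.head_cons,
          Matrix.cons_val_two, Matrix.tail_cons]
        intro h0
        apply hxne
        linarith
      have := hqirr.map (renameEquiv ℝ (Equiv.swap (0 : Fin 3) 1))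
      rwa [renameEquiv_apply, ← e1] at this
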